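/- arXiv:2510.03867 — 3 statements merged into one kernel-verified Lean document; each statement's English description precedes it below -/
import Mathlib

section
/- Let X be an n×n real symmetric positive definite matrix and D a diagonal matrix with strictly positive diagonal entries satisfying 0 ≺ D ≺ 2 X^{-1} (i.e., D and 2X^{-1} - D are positive definite). Then every eigenvalue of I - X D has absolute value strictly less than 1, i.e., the spectral radius of I - X D is strictly less than 1. -/
open Matrix ComplexOrder

lemma posDef_map_ofReal {n : ℕ} {M : Matrix (Fin n) (Fin n) ℝ} (hM : M.PosDef) :
    (M.map Complex.ofReal).PosDef := by
  refine posDef_iff_dotProduct_mulVec.mpr ⟨?_, ?_⟩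
  · exact hM.1.map Complex.ofReal fun r => (Complex.conj_ofReal r).symm
  · intro x hx
    set a : Fin n → ℝ := fun i => (x i).re with ha
    set b : Fin n → ℝ := fun i => (x i).im with hb
    have hre : (star x ⬝ᵥ (M.map Complex.ofReal *ᵥ x)).re
        = a ⬝ᵥ (M *ᵥ a) + b ⬝ᵥ (M *ᵥ b) := by
      simp only [dotProduct, mulVec, map_apply, Pi.star_apply, Complex.re_sum, Complex.im_sum,
        Finset.mul_sum, Complex.mul_re, Complex.mul_im, Complex.star_def, Complex.conj_re,
        Complex.conj_im, Complex.ofReal_re, Complex.ofReal_im, zero_mul, mul_zero, sub_zero,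
        zero_sub, neg_mul, neg_neg, zero_add, add_zero, Finset.sum_neg_distrib, sub_neg_eq_add]
      rw [← Finset.sum_add_distrib]
      exact Finset.sum_congr rfl fun i _ => Finset.sum_add_distrib
    have him : (star x ⬝ᵥ (M.map Complex.ofReal *ᵥ x)).im
        = a ⬝ᵥ (M *ᵥ b) - b ⬝ᵥ (M *ᵥ a) := by
      simp only [dotProduct, mulVec, map_apply, Pi.star_apply, Complex.re_sum, Complex.im_sum,
        Finset.mul_sum, Complex.mul_re, Complex.mul_im, Complex.star_def, Complex.conj_re,
        Complex.conj_im, Complex.ofReal_re, Complex.ofReal_im, zero_mul, mul_zero, sub_zero,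
        zero_sub, neg_mul, neg_neg, zero_add, add_zero, Finset.sum_neg_distrib, sub_neg_eq_add]
      rw [← Finset.sum_sub_distrib]
      refine Finset.sum_congr rfl fun i _ => ?_
      rw [← Finset.sum_sub_distrib]
      exact Finset.sum_congr rfl fun j _ => (sub_eq_add_neg _ _).symm
    have hsymm : Mᵀ = M := hM.1.eq
    have hcross : a ⬝ᵥ (M *ᵥ b) = b ⬝ᵥ (M *ᵥ a) := by
      rw [dotProduct_mulVec, ← mulVec_transpose, hsymm]
      exact dotProduct_comm _ _
    refine Complex.pos_iff.mpr ⟨?_, by rw [him, hcross, sub_self]⟩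
    rw [hre]
    have hab : a ≠ 0 ∨ b ≠ 0 := by
      by_contra h
      push_neg at h
      apply hx
      funext i
      have h1 : a i = 0 := by rw [h.1]; rfl
      have h2 : b i = 0 := by rw [h.2]; rfl
      exact Complex.ext h1 h2
    have hsd := hM.posSemidef
    have key : ∀ c : Fin n → ℝ, 0 ≤ c ⬝ᵥ (M *ᵥ c) := by
      intro c
      simpa using hsd.dotProduct_mulVec_nonneg c
    have keyp : ∀ c : Fin n → ℝ, c ≠ 0 → 0 < c ⬝ᵥ (M *ᵥ c) := by
      intro c hc
      simpa using hM.dotProduct_mulVec_pos hc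
    rcases hab with h | h
    · exact add_pos_of_pos_of_nonneg (keyp a h) (key b)
    · exact add_pos_of_nonneg_of_pos (key a) (keyp b h)

lemma posDef_conj {n : ℕ} {A X : Matrix (Fin n) (Fin n) ℝ} (hA : A.PosDef) (hX : X.PosDef) :
    (X * A * X).PosDef := by
  refine posDef_iff_dotProduct_mulVec.mpr ⟨?_, ?_⟩
  · have h := Matrix.isHermitian_conjTranspose_mul_mul X hA.1
    rwa [hX.1.eq] at h
  · intro y hy
    have hXy : X *ᵥ y ≠ 0 := by
      intro h
      have h2 := hX.dotProduct_mulVec_pos hy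
      rw [h, dotProduct_zero] at h2
      exact lt_irrefl _ h2
    have key : star y ⬝ᵥ ((X * A * X) *ᵥ y) = star (X *ᵥ y) ⬝ᵥ (A *ᵥ (X *ᵥ y)) := by
      rw [star_mulVec, hX.1.eq, ← mulVec_mulVec, ← mulVec_mulVec, dotProduct_mulVec]
    rw [key]
    exact hA.dotProduct_mulVec_pos hXy

/-- If `X` is symmetric positive definite and `D = diag(d)` with `d > 0`
satisfies `0 ≺ D ≺ 2 X⁻¹`, then every (complex) eigenvalue of `I - X D` has absolute
value strictly less than 1, i.e. the spectral radius of `I - X D` is `< 1`. -/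
theorem stmt2 {n : ℕ} (X : Matrix (Fin n) (Fin n) ℝ) (hX : X.PosDef)
    (d : Fin n → ℝ) (D : Matrix (Fin n) (Fin n) ℝ) (hD : D = Matrix.diagonal d)
    (hDpos : D.PosDef)
    (hDlt : ((2 : ℝ) • X⁻¹ - D).PosDef) :
    ∀ μ ∈ spectrum ℂ ((1 - X * D).map Complex.ofReal), ‖μ‖ < 1 := by
  intro μ hμ
  set X' : Matrix (Fin n) (Fin n) ℂ := X.map Complex.ofReal with hX'def
  set D' : Matrix (Fin n) (Fin n) ℂ := D.map Complex.ofReal with hD'def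
  -- the mapped matrix
  have hmap : (1 - X * D).map Complex.ofReal = 1 - X' * D' := by
    have h1 : (1 - X * D).map Complex.ofReal = Complex.ofRealHom.mapMatrix (1 - X * D) := rfl
    rw [h1, map_sub, _root_.map_one, _root_.map_mul]
    rfl
  -- eigenvector
  have hdet : (algebraMap ℂ (Matrix (Fin n) (Fin n) ℂ) μ - (1 - X * D).map Complex.ofReal).det = 0 := by
    by_contra h
    exact (spectrum.mem_iff.mp hμ) ((Matrix.isUnit_iff_isUnit_det _).mpr (isUnit_iff_ne_zero.mpr h))
  obtain ⟨v, hv0, hv⟩ := (Matrix.exists_mulVec_eq_zero_iff).mpr hdet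
  have hev : (1 - X' * D') *ᵥ v = μ • v := by
    have h2 : (algebraMap ℂ (Matrix (Fin n) (Fin n) ℂ) μ) *ᵥ v = μ • v := by
      rw [Matrix.algebraMap_eq_diagonal]
      funext i
      simp [Matrix.mulVec_diagonal]
    rw [sub_mulVec, hmap, h2, sub_eq_zero] at hv
    exact hv.symm
  -- positive definiteness facts over ℂ
  have hX'pos : X'.PosDef := posDef_map_ofReal hX
  have hD'pos : D'.PosDef := posDef_map_ofReal hDpos
  have hXunit : IsUnit X.det := isUnit_iff_ne_zero.mpr hX.det_pos.ne'
  have hZeq : X * ((2 : ℝ) • X⁻¹ - D) * X = X + X - X * D * X := by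
    rw [mul_sub, sub_mul, Matrix.mul_smul, Matrix.mul_nonsing_inv X hXunit,
      Matrix.smul_mul, one_mul, two_smul]
  have hZpos : (X + X - X * D * X).PosDef := hZeq ▸ posDef_conj hDlt hX
  have hZmap : (X + X - X * D * X).map Complex.ofReal = X' + X' - X' * D' * X' := by
    have h1 : (X + X - X * D * X).map Complex.ofReal
        = Complex.ofRealHom.mapMatrix (X + X - X * D * X) := rfl
    rw [h1, map_sub, _root_.map_add, _root_.map_mul, _root_.map_mul]
    rfl
  have hZ'pos : (X' + X' - X' * D' * X').PosDef := hZmap ▸ posDef_map_ofReal hZpos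
  -- the eigen-relations
  set l : ℂ := 1 - μ with hl
  set u : (Fin n) → ℂ := D' *ᵥ v with hu
  have hXu : X' *ᵥ u = l • v := by
    rw [hu, mulVec_mulVec]
    have : (1 - X' * D') *ᵥ v = v - (X' * D') *ᵥ v := by
      rw [sub_mulVec, one_mulVec]
    rw [this] at hev
    rw [hl, sub_smul, one_smul]
    exact eq_sub_of_add_eq' (sub_eq_iff_eq_add.mp hev).symm
  -- scalar quantities
  have hα : (0:ℂ) < star v ⬝ᵥ u := hD'pos.dotProduct_mulVec_pos hv0
  have hu0 : u ≠ 0 := by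
    intro h
    rw [h, dotProduct_zero] at hα
    exact lt_irrefl _ hα
  have hαs : star u ⬝ᵥ v = star v ⬝ᵥ u := by
    rw [hu, star_mulVec, hD'pos.1.eq, ← dotProduct_mulVec]
  have hβ : (0:ℂ) < star u ⬝ᵥ (X' *ᵥ u) := hX'pos.dotProduct_mulVec_pos hu0
  have hγ : (0:ℂ) < star u ⬝ᵥ ((X' + X' - X' * D' * X') *ᵥ u) := hZ'pos.dotProduct_mulVec_pos hu0
  have hβeq : star u ⬝ᵥ (X' *ᵥ u) = l * (star v ⬝ᵥ u) := by
    rw [hXu, dotProduct_smul, smul_eq_mul, hαs]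
  have hZu : (X' + X' - X' * D' * X') *ᵥ u = (l + l - l * l) • v := by
    have h1 : (X' * D' * X') *ᵥ u = (l * l) • v := by
      rw [← mulVec_mulVec, ← mulVec_mulVec, hXu, mulVec_smul, ← hu, mulVec_smul, hXu, smul_smul]
    rw [sub_mulVec, add_mulVec, hXu, h1]
    module
  have hγeq : star u ⬝ᵥ ((X' + X' - X' * D' * X') *ᵥ u) = (l + l - l * l) * (star v ⬝ᵥ u) := by
    rw [hZu, dotProduct_smul, smul_eq_mul, hαs]
  -- extract real numbers
  set A : ℝ := (star v ⬝ᵥ u).re with hA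
  have hαre : (0:ℝ) < A := (Complex.pos_iff.mp hα).1
  have hαim : (star v ⬝ᵥ u).im = 0 := (Complex.pos_iff.mp hα).2.symm
  have hαval : star v ⬝ᵥ u = (A : ℂ) := Complex.ext rfl (by simpa using hαim)
  set B : ℝ := (star u ⬝ᵥ (X' *ᵥ u)).re with hB
  have hβre : (0:ℝ) < B := (Complex.pos_iff.mp hβ).1
  have hβim : (star u ⬝ᵥ (X' *ᵥ u)).im = 0 := (Complex.pos_iff.mp hβ).2.symm
  have hβval : star u ⬝ᵥ (X' *ᵥ u) = (B : ℂ) := Complex.ext rfl (by simpa using hβim)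
  set C : ℝ := (star u ⬝ᵥ ((X' + X' - X' * D' * X') *ᵥ u)).re with hC
  have hγre : (0:ℝ) < C := (Complex.pos_iff.mp hγ).1
  have hγim : (star u ⬝ᵥ ((X' + X' - X' * D' * X') *ᵥ u)).im = 0 := (Complex.pos_iff.mp hγ).2.symm
  have hγval : star u ⬝ᵥ ((X' + X' - X' * D' * X') *ᵥ u) = (C : ℂ) := Complex.ext rfl (by simpa using hγim)
  -- l is real
  have hAne : (A : ℂ) ≠ 0 := by
    exact_mod_cast hαre.ne'
  have hlval : l = ((B / A : ℝ) : ℂ) := by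
    rw [hβval, hαval] at hβeq
    rw [Complex.ofReal_div]
    rw [eq_div_iff hAne]
    exact hβeq.symm
  set L : ℝ := B / A with hL
  have hLpos : 0 < L := div_pos hβre hαre
  have hCeq : (L + L - L * L) * A = C := by
    have := hγeq
    rw [hγval, hαval, hlval] at this
    push_cast at this
    exact_mod_cast this.symm
  have hq : 0 < L + L - L * L := by
    by_contra h
    push_neg at h
    nlinarith [mul_nonneg (neg_nonneg.mpr h) hαre.le]
  have hL2 : L < 2 := by
    nlinarith
  -- conclude
  have hμval : μ = ((1 - L : ℝ) : ℂ) := by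
    have : μ = 1 - l := by rw [hl]; ring
    rw [this, hlval]
    push_cast
    ring
  rw [hμval, Complex.norm_real, Real.norm_eq_abs, abs_lt]
  constructor <;> linarith
end

section
/- Suppose R = ρ X for some positive real ρ, where X is an n×n real symmetric positive definite matrix, and K^p, K^q are diagonal matrices such that ρ K^p + K^q is a diagonal matrix with strictly positive entries satisfying ρ K^p + K^q ≺ 2 X^{-1}. Then the closed-loop matrix A = I - R K^p - X K^q has spectral radius strictly less than 1, and hence the system v_t = A v_{t-1} satisfies v_t → 0 as t → ∞ for every initial condition v_0. -/
open Matrix Filter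

open scoped ComplexOrder in
/-- quadratic form of a mapped real posdef matrix at a nonzero complex vector is a
positive real. -/
lemma quad_pos_aux {n : ℕ} {M : Matrix (Fin n) (Fin n) ℝ} (hM : M.PosDef)
    (v : Fin n → ℂ) (hv : v ≠ 0) :
    ∃ r : ℝ, 0 < r ∧ star v ⬝ᵥ ((M.map (Complex.ofReal)) *ᵥ v) = (r : ℂ) := by
  have hfeq : (Complex.ofReal : ℝ → ℂ) = ⇑(Complex.ofRealHom) := rfl
  classical
  set x : Fin n → ℝ := fun i => (v i).re with hx
  set y : Fin n → ℝ := fun i => (v i).im with hy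
  set f : ℝ →+* ℂ := Complex.ofRealHom
  have hvdec : v = (f ∘ x) + Complex.I • (f ∘ y) := by
    funext i
    simp [f, Function.comp, Complex.ext_iff, mul_comm]
    exact ⟨rfl, rfl⟩
  have hmx : (M.map f) *ᵥ (f ∘ x) = f ∘ (M *ᵥ x) := by
    funext i; exact (RingHom.map_mulVec f M x i).symm
  have hmy : (M.map f) *ᵥ (f ∘ y) = f ∘ (M *ᵥ y) := by
    funext i; exact (RingHom.map_mulVec f M y i).symm
  have hstar : star v = (f ∘ x) - Complex.I • (f ∘ y) := by
    funext i
    simp [f, Function.comp, Complex.ext_iff]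
    exact ⟨rfl, rfl⟩
  have hsymm : y ⬝ᵥ (M *ᵥ x) = x ⬝ᵥ (M *ᵥ y) := by
    rw [Matrix.dotProduct_mulVec, ← Matrix.mulVec_transpose]
    have : Mᵀ = M := hM.isHermitian
    rw [this, dotProduct_comm]
  have key : star v ⬝ᵥ ((M.map f) *ᵥ v)
      = (f (x ⬝ᵥ (M *ᵥ x) + y ⬝ᵥ (M *ᵥ y)) : ℂ) := by
    rw [hstar, hvdec, mulVec_add, mulVec_smul, hmx, hmy]
    rw [sub_dotProduct, dotProduct_add, dotProduct_add, smul_dotProduct,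
      smul_dotProduct, dotProduct_smul, dotProduct_smul]
    rw [← RingHom.map_dotProduct f x (M *ᵥ x), ← RingHom.map_dotProduct f y (M *ᵥ y),
      ← RingHom.map_dotProduct f x (M *ᵥ y), ← RingHom.map_dotProduct f y (M *ᵥ x)]
    rw [hsymm]
    ring_nf
    rw [Complex.I_sq, map_add]
    ring
  refine ⟨x ⬝ᵥ (M *ᵥ x) + y ⬝ᵥ (M *ᵥ y), ?_, key⟩
  have hxy : x ≠ 0 ∨ y ≠ 0 := by
    by_contra h
    push_neg at h
    apply hv
    funext i
    have h1 : x i = 0 := by rw [h.1]; rfl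
    have h2 : y i = 0 := by rw [h.2]; rfl
    have := Complex.ext (z := v i) (w := 0) (by simpa [hx] using h1) (by simpa [hy] using h2)
    simpa using this
  have hxx : 0 ≤ x ⬝ᵥ (M *ᵥ x) := by simpa using hM.posSemidef.dotProduct_mulVec_nonneg x
  have hyy : 0 ≤ y ⬝ᵥ (M *ᵥ y) := by simpa using hM.posSemidef.dotProduct_mulVec_nonneg y
  rcases hxy with h | h
  · have : 0 < x ⬝ᵥ (M *ᵥ x) := by simpa using hM.dotProduct_mulVec_pos h
    linarith
  · have : 0 < y ⬝ᵥ (M *ᵥ y) := by simpa using hM.dotProduct_mulVec_pos h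
    linarith

attribute [local instance] Matrix.linftyOpNormedRing Matrix.linftyOpNormedAlgebra

/-- Theorem 2 of the paper. If `R = ρ X` with `X` symmetric positive
definite, `Kᵖ, Kᵠ` diagonal with `ρ Kᵖ + Kᵠ` having strictly positive entries and
`ρ Kᵖ + Kᵠ ≺ 2 X⁻¹`, then `A = I - R Kᵖ - X Kᵠ` has spectral radius `< 1`, and every
trajectory of `v_t = A v_{t-1}` converges to zero. -/
theorem stmt4 {n : ℕ} (ρ : ℝ) (hρ : 0 < ρ)
    (X R : Matrix (Fin n) (Fin n) ℝ) (hX : X.PosDef) (hR : R = ρ • X)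
    (kp kq : Fin n → ℝ)
    (hpos : ∀ i, 0 < ρ * kp i + kq i)
    (hlt : ((2 : ℝ) • X⁻¹ - Matrix.diagonal (fun i => ρ * kp i + kq i)).PosDef)
    (A : Matrix (Fin n) (Fin n) ℝ)
    (hA : A = 1 - R * Matrix.diagonal kp - X * Matrix.diagonal kq) :
    (∀ μ ∈ spectrum ℂ (A.map Complex.ofReal), ‖μ‖ < 1) ∧
      (∀ v : ℕ → (Fin n → ℝ), (∀ t : ℕ, v (t + 1) = A *ᵥ v t) →
        Tendsto v atTop (nhds 0)) := by
  classical
  set f : ℝ →+* ℂ := Complex.ofRealHom with hf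
  set D : Matrix (Fin n) (Fin n) ℝ := Matrix.diagonal (fun i => ρ * kp i + kq i) with hD
  have hDpos : D.PosDef := Matrix.posDef_diagonal_iff.mpr hpos
  have hAXD : A = 1 - X * D := by
    have h1 : D = ρ • Matrix.diagonal kp + Matrix.diagonal kq := by
      rw [hD, ← Matrix.diagonal_smul, ← Matrix.diagonal_add]
      rfl
    rw [hA, hR, h1, Matrix.mul_add, Matrix.mul_smul, Matrix.smul_mul, sub_sub]
  have hXdet : IsUnit X.det := isUnit_iff_ne_zero.mpr (ne_of_gt hX.det_pos)
  have hXinvX : (X⁻¹.map ⇑f) * (X.map ⇑f) = 1 := by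
    rw [← RingHom.mapMatrix_apply, ← RingHom.mapMatrix_apply, ← _root_.map_mul,
      Matrix.nonsing_inv_mul X hXdet, _root_.map_one]
  have hMc : A.map ⇑f = 1 - (X.map ⇑f) * (D.map ⇑f) := by
    rw [← RingHom.mapMatrix_apply, hAXD, map_sub, _root_.map_one, _root_.map_mul,
      RingHom.mapMatrix_apply, RingHom.mapMatrix_apply]
  have part1 : ∀ μ ∈ spectrum ℂ (A.map Complex.ofReal), ‖μ‖ < 1 := by
    intro μ hμ
    rw [spectrum.mem_iff] at hμ
    have hdet : ((algebraMap ℂ (Matrix (Fin n) (Fin n) ℂ)) μ - A.map Complex.ofReal).det = 0 := by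
      by_contra h
      exact hμ ((Matrix.isUnit_iff_isUnit_det _).mpr (isUnit_iff_ne_zero.mpr h))
    obtain ⟨v, hv0, hveq⟩ := (Matrix.exists_mulVec_eq_zero_iff).mpr hdet
    have heig : (A.map ⇑f) *ᵥ v = μ • v := by
      have h2 : ((algebraMap ℂ (Matrix (Fin n) (Fin n) ℂ)) μ - A.map Complex.ofReal) *ᵥ v
          = μ • v - (A.map ⇑f) *ᵥ v := by
        rw [Matrix.sub_mulVec, Algebra.algebraMap_eq_smul_one, Matrix.smul_mulVec,
          Matrix.one_mulVec]
        rfl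
      rw [h2, sub_eq_zero] at hveq
      exact hveq.symm
    -- (X D) v = (1 - μ) v
    have hXDv : ((X.map ⇑f) * (D.map ⇑f)) *ᵥ v = (1 - μ) • v := by
      have := heig
      rw [hMc, Matrix.sub_mulVec, Matrix.one_mulVec] at this
      have h3 : ((X.map ⇑f) * (D.map ⇑f)) *ᵥ v = v - μ • v := by
        rw [← this]; abel
      rw [h3, sub_smul, one_smul]
    -- D v = (1-μ) • (X⁻¹ v)
    have hDv : (D.map ⇑f) *ᵥ v = (1 - μ) • ((X⁻¹.map ⇑f) *ᵥ v) := by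
      calc (D.map ⇑f) *ᵥ v = ((X⁻¹.map ⇑f) * ((X.map ⇑f) * (D.map ⇑f))) *ᵥ v := by
            rw [← mul_assoc, hXinvX, one_mul]
        _ = (X⁻¹.map ⇑f) *ᵥ (((X.map ⇑f) * (D.map ⇑f)) *ᵥ v) := by
            rw [Matrix.mulVec_mulVec]
        _ = (1 - μ) • ((X⁻¹.map ⇑f) *ᵥ v) := by rw [hXDv, Matrix.mulVec_smul]
    obtain ⟨r1, hr1, he1'⟩ := quad_pos_aux hDpos v hv0
    obtain ⟨r2, hr2, he2'⟩ := quad_pos_aux hX.inv v hv0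
    obtain ⟨r3, hr3, he3'⟩ := quad_pos_aux hlt v hv0
    have he1 : star v ⬝ᵥ ((D.map ⇑f) *ᵥ v) = (r1 : ℂ) := he1'
    have he2 : star v ⬝ᵥ ((X⁻¹.map ⇑f) *ᵥ v) = (r2 : ℂ) := he2'
    have he3 : star v ⬝ᵥ ((((2:ℝ) • X⁻¹ - D).map ⇑f) *ᵥ v) = (r3 : ℂ) := he3'
    -- he3 relates: r3 = 2 r2 - r1
    have hlin : star v ⬝ᵥ ((((2:ℝ) • X⁻¹ - D).map ⇑f) *ᵥ v)
        = (r2 : ℂ) + (r2 : ℂ) - (r1 : ℂ) := by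
      have h4 : ((2:ℝ) • X⁻¹ - D) = X⁻¹ + X⁻¹ - D := by rw [two_smul]
      have h5 : (((2:ℝ) • X⁻¹ - D).map ⇑f) = X⁻¹.map ⇑f + X⁻¹.map ⇑f - D.map ⇑f := by
        rw [← RingHom.mapMatrix_apply, h4, map_sub, map_add]
        rfl
      rw [h5, Matrix.sub_mulVec, Matrix.add_mulVec, dotProduct_sub, dotProduct_add, he1, he2]
    rw [he3] at hlin
    have hr321 : r3 = 2 * r2 - r1 := by
      have h9 : (r3:ℂ) = ((2 * r2 - r1 : ℝ) : ℂ) := by rw [hlin]; push_cast; ring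
      exact_mod_cast h9
    -- r1 = (1-μ) r2
    have hmu : (r1 : ℂ) = (1 - μ) * (r2 : ℂ) := by
      rw [← he1, ← he2, hDv, dotProduct_smul, smul_eq_mul]
    have hr2ne : (r2 : ℂ) ≠ 0 := by exact_mod_cast ne_of_gt hr2
    have h8 : (1 - μ) = (r1:ℂ)/(r2:ℂ) := (eq_div_iff hr2ne).mpr hmu.symm
    have hμval : μ = ((1 - r1 / r2 : ℝ) : ℂ) := by
      push_cast
      linear_combination -h8
    rw [hμval]
    rw [Complex.norm_real, Real.norm_eq_abs, abs_lt]
    have h6 : 0 < r1 / r2 := div_pos hr1 hr2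
    have h7 : r1 / r2 < 2 := by
      rw [div_lt_iff₀ hr2]
      linarith
    constructor <;> [linarith; linarith]
  refine ⟨part1, ?_⟩
  intro v hv
  set Mc : Matrix (Fin n) (Fin n) ℂ := A.map ⇑f with hMcdef
  haveI : FiniteDimensional ℂ (Matrix (Fin n) (Fin n) ℂ) := by infer_instance
  haveI : CompleteSpace (Matrix (Fin n) (Fin n) ℂ) := FiniteDimensional.complete ℂ _
  have hfin := Matrix.finite_spectrum Mc
  set c0 : NNReal := hfin.toFinset.sup (fun μ => ‖μ‖₊) with hc0
  have hc0lt : c0 < 1 := by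
    rw [hc0]
    refine (Finset.sup_lt_iff (by norm_num)).mpr ?_
    intro μ hμ
    have h10 := part1 μ (hfin.mem_toFinset.mp hμ)
    exact_mod_cast h10
  have hrad : spectralRadius ℂ Mc < 1 := by
    have hle : spectralRadius ℂ Mc ≤ (c0 : ENNReal) := by
      refine iSup₂_le fun k hk => ?_
      exact_mod_cast Finset.le_sup (f := fun μ => ‖μ‖₊) (hfin.mem_toFinset.mpr hk)
    refine lt_of_le_of_lt hle ?_
    exact_mod_cast hc0lt
  obtain ⟨c, hc1, hc2⟩ := ENNReal.lt_iff_exists_nnreal_btwn.mp hrad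
  have hgel := spectrum.pow_nnnorm_pow_one_div_tendsto_nhds_spectralRadius Mc
  have hev : ∀ᶠ t : ℕ in atTop, ((‖Mc ^ t‖₊ : ENNReal)) ^ (1/(t:ℝ)) < (c : ENNReal) :=
    hgel.eventually_lt_const hc1
  have hc1R : (c : ℝ) < 1 := by exact_mod_cast hc2
  have hbound : ∀ᶠ t : ℕ in atTop, ‖Mc ^ t‖ ≤ (c:ℝ) ^ t := by
    filter_upwards [hev, eventually_ge_atTop 1] with t ht ht1
    have htne : (t:ℝ) ≠ 0 := by positivity
    have h1 : (‖Mc ^ t‖₊ : ENNReal) ≤ (c : ENNReal) ^ (t:ℝ) := by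
      have h2 := ENNReal.rpow_le_rpow ht.le (Nat.cast_nonneg t)
      rwa [← ENNReal.rpow_mul, one_div_mul_cancel htne, ENNReal.rpow_one] at h2
    rw [← ENNReal.coe_rpow_of_nonneg _ (Nat.cast_nonneg t), ENNReal.coe_le_coe] at h1
    have h3 : (‖Mc ^ t‖₊ : ℝ) ≤ ((c ^ ((t:ℕ):ℝ) : NNReal) : ℝ) := h1
    rw [NNReal.coe_rpow, Real.rpow_natCast] at h3
    exact h3
  set w : ℕ → (Fin n → ℂ) := fun t i => ((v t i : ℝ) : ℂ) with hwdef
  have hw : ∀ t, w t = (Mc ^ t) *ᵥ (w 0) := by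
    intro t; induction t with
    | zero => simp [Matrix.one_mulVec]
    | succ t ih =>
      have hstep : w (t+1) = Mc *ᵥ w t := by
        funext i
        show ((v (t+1) i : ℝ) : ℂ) = _
        rw [hv t]
        exact RingHom.map_mulVec f A (v t) i
      rw [hstep, ih, Matrix.mulVec_mulVec, ← pow_succ']
  have hnorm : ∀ᶠ t : ℕ in atTop, ‖w t‖ ≤ (c:ℝ)^t * ‖w 0‖ := by
    filter_upwards [hbound] with t ht
    rw [hw t]
    exact le_trans (Matrix.linfty_opNorm_mulVec _ _)
      (mul_le_mul_of_nonneg_right ht (norm_nonneg _))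
  have hwz : Tendsto (fun t => ‖w t‖) atTop (nhds 0) := by
    refine squeeze_zero' (Eventually.of_forall fun t => norm_nonneg _) hnorm ?_
    have h11 := (tendsto_pow_atTop_nhds_zero_of_lt_one (c.coe_nonneg) hc1R).mul_const ‖w 0‖
    simpa using h11
  rw [tendsto_pi_nhds]
  intro i
  have h12 : ∀ t, ‖v t i‖ ≤ ‖w t‖ := by
    intro t
    calc ‖v t i‖ = ‖w t i‖ := by rw [hwdef]; simp [Complex.norm_real]
      _ ≤ ‖w t‖ := norm_le_pi_norm (w t) i
  simpa using squeeze_zero_norm h12 hwz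
end

section
/- Let X be an n×n real symmetric positive definite matrix and D₁, D₂ diagonal matrices with 0 ≺ D₁ ⪯ D₂ ≺ 2X^{-1} entrywise (i.e., 0 < (D₁)_{ii} ≤ (D₂)_{ii} and D₂ ≺ 2X^{-1}). Then both I - XD₁ and I - XD₂ have spectral radius strictly less than 1. -/
open Matrix

lemma aux_posDef_conj {n : ℕ} {A : Matrix (Fin n) (Fin n) ℝ} (hA : A.PosDef)
    (B : Matrix (Fin n) (Fin n) ℝ) (hB : IsUnit B) : (Bᴴ * A * B).PosDef := by
  refine PosDef.of_dotProduct_mulVec_pos (isHermitian_conjTranspose_mul_mul B hA.1) fun x hx => ?_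
  have hBx : B *ᵥ x ≠ 0 := by
    intro h
    apply hx
    have hinj : Function.Injective B.mulVec := mulVec_injective_iff_isUnit.mpr hB
    exact hinj (by simpa using h)
  simpa only [star_mulVec, dotProduct_mulVec, vecMul_vecMul] using hA.dotProduct_mulVec_pos hBx

lemma aux_key {n : ℕ} (X : Matrix (Fin n) (Fin n) ℝ) (hX : X.PosDef) (d : Fin n → ℝ)
    (hd : ∀ i, 0 < d i) (h2 : ((2 : ℝ) • X⁻¹ - Matrix.diagonal d).PosDef) :
    ∀ μ ∈ spectrum ℂ ((1 - X * Matrix.diagonal d).map Complex.ofReal), ‖μ‖ < 1 := by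
  classical
  have hXps := hX.posSemidef
  obtain ⟨R, hRps, hRR⟩ : ∃ R : Matrix (Fin n) (Fin n) ℝ, R.PosSemidef ∧ R * R = X :=
    open scoped MatrixOrder in
    ⟨CFC.sqrt X, (CFC.sqrt_nonneg X).posSemidef, CFC.sqrt_mul_sqrt_self X hXps.nonneg⟩
  have hRH : Rᴴ = R := hRps.1
  have hRunit : IsUnit R := by
    rw [Matrix.isUnit_iff_isUnit_det]
    have hdet : R.det * R.det = X.det := by rw [← det_mul, hRR]
    have : IsUnit (R.det * R.det) := hdet ▸ hX.det_pos.ne'.isUnit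
    exact isUnit_of_mul_isUnit_left this
  have hRdet : IsUnit R.det := (Matrix.isUnit_iff_isUnit_det R).mp hRunit
  set D := Matrix.diagonal d with hDdef
  set S := R * D * R with hSdef
  have hS : S.PosDef := by
    have := aux_posDef_conj (Matrix.PosDef.diagonal hd) R hRunit
    rwa [hRH] at this
  have key2 : R * ((2:ℝ) • X⁻¹ - D) * R = (2:ℝ) • (1 : Matrix (Fin n) (Fin n) ℝ) - S := by
    have hXinv : X⁻¹ = R⁻¹ * R⁻¹ := by rw [← hRR, Matrix.mul_inv_rev]
    rw [hXinv, Matrix.mul_sub, Matrix.sub_mul]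
    congr 1
    rw [mul_smul_comm, smul_mul_assoc]
    rw [show R * (R⁻¹ * R⁻¹) * R = (R * R⁻¹) * (R⁻¹ * R) by noncomm_ring,
      Matrix.mul_nonsing_inv R hRdet, Matrix.nonsing_inv_mul R hRdet, one_mul]
  have h2S : ((2:ℝ) • (1 : Matrix (Fin n) (Fin n) ℝ) - S).PosDef := by
    rw [← key2]
    have := aux_posDef_conj h2 R hRunit
    rwa [hRH] at this
  set Eig : Fin n → ℝ := hS.1.eigenvalues with hEig
  have heigpos : ∀ i, 0 < Eig i := hS.eigenvalues_pos
  have heiglt : ∀ i, Eig i < 2 := by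
    intro i
    obtain ⟨v, hv, hvec⟩ : ∃ v : Fin n → ℝ, v ≠ 0 ∧ S *ᵥ v = Eig i • v :=
      ⟨_, by simpa using hS.1.eigenvectorBasis.orthonormal.ne_zero i, hS.1.mulVec_eigenvectorBasis i⟩
    have hq := h2S.dotProduct_mulVec_pos hv
    have hvv : (0:ℝ) < star v ⬝ᵥ v := dotProduct_star_self_pos_iff.mpr hv
    have hcalc : star v ⬝ᵥ (((2:ℝ) • (1 : Matrix (Fin n) (Fin n) ℝ) - S) *ᵥ v)
        = (2 - Eig i) * (star v ⬝ᵥ v) := by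
      rw [Matrix.sub_mulVec, Matrix.smul_mulVec, Matrix.one_mulVec, hvec,
        dotProduct_sub, dotProduct_smul, dotProduct_smul, smul_eq_mul, smul_eq_mul]
      ring
    rw [hcalc] at hq
    nlinarith [hq, hvv]
  obtain ⟨V, hV1, hV2, hVS⟩ : ∃ V : Matrix (Fin n) (Fin n) ℝ,
      V * star V = 1 ∧ star V * V = 1 ∧ S = V * Matrix.diagonal Eig * star V := by
    refine ⟨(hS.1.eigenvectorUnitary : Matrix (Fin n) (Fin n) ℝ),
      Matrix.mem_unitaryGroup_iff.mp (hS.1.eigenvectorUnitary).2,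
      Matrix.mem_unitaryGroup_iff'.mp (hS.1.eigenvectorUnitary).2, ?_⟩
    have := hS.1.spectral_theorem
    rwa [RCLike.ofReal_real_eq_id, Function.id_comp] at this
  have hSV : S * V = V * Matrix.diagonal Eig := by
    rw [hVS, mul_assoc, mul_assoc, hV2, mul_one]
  have hreal : (1 - X * D) * (R * V) = (R * V) * Matrix.diagonal (fun i => 1 - Eig i) := by
    have hdiag : Matrix.diagonal (fun i => 1 - Eig i)
        = 1 - Matrix.diagonal Eig := by
      rw [← Matrix.diagonal_one, ← Matrix.diagonal_sub]
    have hXDR : X * D * R = R * S := by rw [← hRR, hSdef]; noncomm_ring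
    rw [hdiag, Matrix.sub_mul, Matrix.mul_sub, one_mul, mul_one]
    congr 1
    rw [← mul_assoc, hXDR, mul_assoc, hSV, ← mul_assoc]
  have hWunit : IsUnit (R * V) := hRunit.mul ⟨⟨V, star V, hV1, hV2⟩, rfl⟩
  set φ : Matrix (Fin n) (Fin n) ℝ →+* Matrix (Fin n) (Fin n) ℂ :=
    (algebraMap ℝ ℂ).mapMatrix with hφ
  have hφmap : ∀ M : Matrix (Fin n) (Fin n) ℝ, φ M = M.map Complex.ofReal := fun M => rfl
  set u : (Matrix (Fin n) (Fin n) ℂ)ˣ := Units.map φ.toMonoidHom hWunit.unit with hu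
  have hcoe : (u : Matrix (Fin n) (Fin n) ℂ) = (R * V).map Complex.ofReal := by
    show φ (hWunit.unit : Matrix (Fin n) (Fin n) ℝ) = _
    rw [hWunit.unit_spec, hφmap]
  have hmapped : ((1 - X * D).map Complex.ofReal) * (u : Matrix (Fin n) (Fin n) ℂ)
      = (u : Matrix (Fin n) (Fin n) ℂ)
        * Matrix.diagonal (fun i => ((1 - Eig i : ℝ) : ℂ)) := by
    rw [hcoe, ← hφmap, ← hφmap, ← _root_.map_mul φ, hreal, _root_.map_mul φ, hφmap, hφmap,
      Matrix.diagonal_map (by simp : Complex.ofReal 0 = 0)]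
  have hconj : (1 - X * D).map Complex.ofReal
      = (u : Matrix (Fin n) (Fin n) ℂ)
        * Matrix.diagonal (fun i => ((1 - Eig i : ℝ) : ℂ))
        * ((u⁻¹ : (Matrix (Fin n) (Fin n) ℂ)ˣ) : Matrix (Fin n) (Fin n) ℂ) := by
    rw [← hmapped, Units.mul_inv_cancel_right]
  rw [hconj, spectrum.units_conjugate]
  intro μ hμ
  rw [spectrum_diagonal] at hμ
  obtain ⟨i, rfl⟩ := hμ
  rw [Complex.norm_real, Real.norm_eq_abs, abs_lt]
  constructor
  · linarith [heiglt i]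
  · linarith [heigpos i]

/-- If `X` is symmetric positive definite and `D₁, D₂` are diagonal
with `0 < (D₁)ᵢᵢ ≤ (D₂)ᵢᵢ` entrywise and `D₂ ≺ 2 X⁻¹`, then both `I - X D₁` and
`I - X D₂` have spectral radius strictly less than 1. -/
theorem stmt15 {n : ℕ} (X : Matrix (Fin n) (Fin n) ℝ) (hX : X.PosDef)
    (d₁ d₂ : Fin n → ℝ)
    (h1pos : ∀ i, 0 < d₁ i) (h12 : ∀ i, d₁ i ≤ d₂ i)
    (h2lt : ((2 : ℝ) • X⁻¹ - Matrix.diagonal d₂).PosDef) :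
    (∀ μ ∈ spectrum ℂ ((1 - X * Matrix.diagonal d₁).map Complex.ofReal), ‖μ‖ < 1) ∧
      (∀ μ ∈ spectrum ℂ ((1 - X * Matrix.diagonal d₂).map Complex.ofReal), ‖μ‖ < 1) := by
  have h1lt : ((2 : ℝ) • X⁻¹ - Matrix.diagonal d₁).PosDef := by
    have hsum : (2 : ℝ) • X⁻¹ - Matrix.diagonal d₁
        = ((2 : ℝ) • X⁻¹ - Matrix.diagonal d₂) + Matrix.diagonal (fun i => d₂ i - d₁ i) := by
      have : Matrix.diagonal (fun i => d₂ i - d₁ i)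
          = Matrix.diagonal d₂ - Matrix.diagonal d₁ :=
        (Matrix.diagonal_sub d₂ d₁).symm
      rw [this]
      abel
    rw [hsum]
    exact h2lt.add_posSemidef
      (Matrix.PosSemidef.diagonal (fun i => sub_nonneg.mpr (h12 i)))
  exact ⟨aux_key X hX d₁ h1pos h1lt,
    aux_key X hX d₂ (fun i => lt_of_lt_of_le (h1pos i) (h12 i)) h2lt⟩
end
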